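/- arXiv:0908.0162 — 2 statements merged into one kernel-verified Lean document; each statement's English description precedes it below -/
import Mathlib

section
/- Let T > 0, d ≥ 1 and α ∈ [0,1). There exists a constant c > 0 such that for every continuously differentiable x:[0,T]→ℝᵈ whose derivative is α-Hölder continuous, ‖ẋ‖_∞^{1+α} ≤ c · ‖x‖_∞^{α} · ‖x‖_{C^{1+α}}. -/
/-- The `C^{1+α}` norm of a vector-valued function on `[0,T]`:
`sup ‖x‖ + sup ‖x'‖ + sup_{s ≠ t} ‖x'(t) - x'(s)‖ / |t-s|^α`. -/
noncomputable def C1alphaNorm {E : Type*} [NormedAddCommGroup E] [NormedSpace ℝ E]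
    (T α : ℝ) (x : ℝ → E) : ℝ :=
  (⨆ t : Set.Icc (0:ℝ) T, ‖x t‖) + (⨆ t : Set.Icc (0:ℝ) T, ‖deriv x t‖) +
    ⨆ p : Set.Icc (0:ℝ) T × Set.Icc (0:ℝ) T,
      if (p.1 : ℝ) = (p.2 : ℝ) then 0
      else ‖deriv x p.1 - deriv x p.2‖ / |(p.1 : ℝ) - (p.2 : ℝ)| ^ α

/-- dist version of Hölder continuity on a set. -/
lemma holderOnWith_dist_le {E : Type*} [NormedAddCommGroup E] {C r : NNReal} {f : ℝ → E}
    {s : Set ℝ} (h : HolderOnWith C r f s) {a b : ℝ} (ha : a ∈ s) (hb : b ∈ s) :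
    dist (f a) (f b) ≤ (C : ℝ) * dist a b ^ (r : ℝ) := by
  have h1 := h.edist_le ha hb
  rw [edist_nndist, edist_nndist, ← ENNReal.coe_rpow_of_nonneg _ r.coe_nonneg,
    ← ENNReal.coe_mul, ENNReal.coe_le_coe] at h1
  have h2 : (nndist (f a) (f b) : ℝ) ≤ ((C * nndist a b ^ (r : ℝ) : NNReal) : ℝ) := h1
  rw [dist_nndist, dist_nndist]
  push_cast at h2 ⊢
  exact h2

/-- Interpolation inequality: `‖ẋ‖_∞^{1+α} ≤ c ‖x‖_∞^α ‖x‖_{C^{1+α}}` for all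
`C^{1+α}` functions `x : [0,T] → ℝᵈ`. -/
theorem stmt8 (T : ℝ) (hT : 0 < T) (d : ℕ) (hd : 1 ≤ d)
    (α : ℝ) (hα0 : 0 ≤ α) (hα1 : α < 1) :
    ∃ c > 0, ∀ x : ℝ → EuclideanSpace ℝ (Fin d), ContDiff ℝ 1 x →
      (∃ K : NNReal, HolderOnWith K ⟨α, hα0⟩ (deriv x) (Set.Icc 0 T)) →
      (⨆ t : Set.Icc (0:ℝ) T, ‖deriv x t‖) ^ (1 + α)
        ≤ c * (⨆ t : Set.Icc (0:ℝ) T, ‖x t‖) ^ α * C1alphaNorm T α x := by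
  classical
  have hT8 : (0:ℝ) < 8 / T := by positivity
  refine ⟨(8 / T) ^ α + 2 * 4 ^ α + 1, by positivity, ?_⟩
  set c : ℝ := (8 / T) ^ α + 2 * 4 ^ α + 1 with hc
  have hc8 : (8 / T) ^ α ≤ c := by
    have h1 : (0:ℝ) ≤ 2 * 4 ^ α := by positivity
    simp only [hc]; linarith
  have hc4 : 2 * 4 ^ α ≤ c := by
    have h1 : (0:ℝ) ≤ (8 / T) ^ α := by positivity
    simp only [hc]; linarith
  have hc1 : (1:ℝ) ≤ c := by
    have h1 : (0:ℝ) ≤ (8 / T) ^ α := by positivity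
    have h2 : (0:ℝ) ≤ 2 * 4 ^ α := by positivity
    simp only [hc]; linarith
  clear_value c
  rintro x hx ⟨K, hK⟩
  haveI : Nonempty (Set.Icc (0:ℝ) T) := ⟨⟨0, le_refl 0, hT.le⟩⟩
  set M0 := ⨆ t : Set.Icc (0:ℝ) T, ‖x t‖ with hM0def
  set M1 := ⨆ t : Set.Icc (0:ℝ) T, ‖deriv x t‖ with hM1def
  set Hn := ⨆ p : Set.Icc (0:ℝ) T × Set.Icc (0:ℝ) T,
      if (p.1 : ℝ) = (p.2 : ℝ) then 0
      else ‖deriv x p.1 - deriv x p.2‖ / |(p.1 : ℝ) - (p.2 : ℝ)| ^ α with hHdef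
  have hNeq : C1alphaNorm T α x = M0 + M1 + Hn := rfl
  rw [hNeq]
  have hdiff : Differentiable ℝ x := hx.differentiable one_ne_zero
  have hcd : Continuous (deriv x) := hx.continuous_deriv le_rfl
  have hcx : Continuous x := hx.continuous
  -- nonnegativity
  have hM0n : 0 ≤ M0 := Real.iSup_nonneg fun t => norm_nonneg _
  have hM1n : 0 ≤ M1 := Real.iSup_nonneg fun t => norm_nonneg _
  have hHnn : 0 ≤ Hn := Real.iSup_nonneg fun p => by
    split_ifs with h
    · exact le_refl 0
    · positivity
  have hNn : 0 ≤ M0 + M1 + Hn := by linarith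
  -- sup bounds
  have hM0b : ∀ t ∈ Set.Icc (0:ℝ) T, ‖x t‖ ≤ M0 := by
    have hbdd : BddAbove (Set.range fun t : Set.Icc (0:ℝ) T => ‖x t‖) := by
      have he : Set.range (fun t : Set.Icc (0:ℝ) T => ‖x t‖)
          = (fun t => ‖x t‖) '' Set.Icc (0:ℝ) T :=
        (Set.image_eq_range (fun t => ‖x t‖) (Set.Icc (0:ℝ) T)).symm
      rw [he]
      exact (isCompact_Icc.image_of_continuousOn hcx.norm.continuousOn).bddAbove
    intro t ht; exact le_ciSup hbdd ⟨t, ht⟩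
  obtain ⟨t0, ht0mem, ht0max⟩ :=
    isCompact_Icc.exists_isMaxOn (Set.nonempty_Icc.2 hT.le) hcd.norm.continuousOn
  have hbdd1 : BddAbove (Set.range fun t : Set.Icc (0:ℝ) T => ‖deriv x t‖) := by
    refine ⟨‖deriv x t0‖, ?_⟩
    rintro _ ⟨t, rfl⟩
    exact ht0max t.2
  have hM1b : ∀ t ∈ Set.Icc (0:ℝ) T, ‖deriv x t‖ ≤ M1 := fun t ht => le_ciSup hbdd1 ⟨t, ht⟩
  have hM1eq : M1 = ‖deriv x t0‖ :=
    le_antisymm (ciSup_le fun t => ht0max t.2) (hM1b t0 ht0mem)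
  -- case α = 0
  rcases eq_or_lt_of_le hα0 with hαz | hαpos
  · subst hαz
    simp only [add_zero, Real.rpow_one, Real.rpow_zero, mul_one]
    have h1 : M1 ≤ M0 + M1 + Hn := by linarith
    calc M1 ≤ M0 + M1 + Hn := h1
      _ ≤ c * (M0 + M1 + Hn) := le_mul_of_one_le_left hNn hc1
  -- α > 0 from here
  have hαne : α ≠ 0 := ne_of_gt hαpos
  have hHb : ∀ s ∈ Set.Icc (0:ℝ) T, ∀ u ∈ Set.Icc (0:ℝ) T,
      ‖deriv x s - deriv x u‖ ≤ Hn * |s - u| ^ α := by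
    have hbddH : BddAbove (Set.range fun p : Set.Icc (0:ℝ) T × Set.Icc (0:ℝ) T =>
        if (p.1 : ℝ) = (p.2 : ℝ) then 0
        else ‖deriv x p.1 - deriv x p.2‖ / |(p.1 : ℝ) - (p.2 : ℝ)| ^ α) := by
      refine ⟨(K : ℝ), ?_⟩
      rintro _ ⟨p, rfl⟩
      dsimp only
      split_ifs with hp
      · exact K.coe_nonneg
      · have hpos : (0:ℝ) < |(p.1 : ℝ) - (p.2 : ℝ)| ^ α :=
          Real.rpow_pos_of_pos (abs_pos.2 (sub_ne_zero.2 hp)) α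
        rw [div_le_iff₀ hpos]
        have h1 := holderOnWith_dist_le hK p.1.2 p.2.2
        rw [dist_eq_norm, Real.dist_eq] at h1
        exact h1
    intro s hs u hu
    rcases eq_or_ne s u with rfl | hsu
    · simp [Real.zero_rpow hαne]
    · have h1 := le_ciSup hbddH (⟨⟨s, hs⟩, ⟨u, hu⟩⟩ :
        Set.Icc (0:ℝ) T × Set.Icc (0:ℝ) T)
      dsimp only at h1
      rw [if_neg hsu] at h1
      have hpos : (0:ℝ) < |s - u| ^ α :=
        Real.rpow_pos_of_pos (abs_pos.2 (sub_ne_zero.2 hsu)) α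
      calc ‖deriv x s - deriv x u‖
          = ‖deriv x s - deriv x u‖ / |s - u| ^ α * |s - u| ^ α := by field_simp
        _ ≤ Hn * |s - u| ^ α := mul_le_mul_of_nonneg_right h1 hpos.le
  clear_value M0 M1 Hn
  set v := deriv x t0 with hv
  have hM1v : ‖v‖ = M1 := hM1eq.symm
  clear_value v
  have hφd : ∀ t : ℝ, HasDerivAt (fun t => (inner ℝ v (x t) : ℝ)) ((inner ℝ v (deriv x t) : ℝ)) t := by
    intro t
    have hxd : HasDerivAt x (deriv x t) t := (hdiff t).hasDerivAt
    have h := (hasDerivAt_const t v).inner (𝕜 := ℝ) hxd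
    simpa using h
  have hcont' : Continuous fun t => (inner ℝ v (deriv x t) : ℝ) := continuous_const.inner hcd
  have key : ∀ h : ℝ, 0 < h → h ≤ T / 2 →
      h * (M1 * M1 - M1 * (Hn * h ^ α)) ≤ 2 * (M1 * M0) := by
    intro h hh0 hhT
    obtain ⟨a, b, hab, ha0, hbT, hta, htb⟩ :
        ∃ a b : ℝ, b - a = h ∧ 0 ≤ a ∧ b ≤ T ∧ a ≤ t0 ∧ t0 ≤ b := by
      rcases le_or_gt t0 (T / 2) with h1 | h1
      · exact ⟨t0, t0 + h, by ring, ht0mem.1, by linarith [ht0mem.2], le_refl _, by linarith⟩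
      · exact ⟨t0 - h, t0, by ring, by linarith, ht0mem.2, by linarith, le_refl _⟩
    have hab' : a ≤ b := by linarith
    have hint : ∫ t in a..b, (inner ℝ v (deriv x t) : ℝ)
        = (inner ℝ v (x b) : ℝ) - (inner ℝ v (x a) : ℝ) :=
      intervalIntegral.integral_eq_sub_of_hasDerivAt (fun t _ => hφd t)
        (hcont'.intervalIntegrable a b)
    have hpt : ∀ t ∈ Set.Icc a b, M1 * M1 - M1 * (Hn * h ^ α) ≤ (inner ℝ v (deriv x t) : ℝ) := by
      intro t ht
      have htT : t ∈ Set.Icc (0:ℝ) T := ⟨le_trans ha0 ht.1, le_trans ht.2 hbT⟩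
      have h3 : |t - t0| ≤ h := by
        rw [abs_sub_le_iff]; constructor <;> linarith [ht.1, ht.2]
      have h4 : |t - t0| ^ α ≤ h ^ α := Real.rpow_le_rpow (abs_nonneg _) h3 hα0
      have h1 : ‖deriv x t - v‖ ≤ Hn * h ^ α := by
        rw [hv]
        exact le_trans (hHb t htT t0 ht0mem) (mul_le_mul_of_nonneg_left h4 hHnn)
      have h5 : (inner ℝ v (deriv x t) : ℝ)
          = (inner ℝ v v : ℝ) + (inner ℝ v (deriv x t - v) : ℝ) := by
        rw [inner_sub_right]; ring
      have h6 : (inner ℝ v v : ℝ) = M1 * M1 := by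
        rw [real_inner_self_eq_norm_mul_norm, hM1v]
      have h7 := abs_real_inner_le_norm v (deriv x t - v)
      have h8 : ‖v‖ * ‖deriv x t - v‖ ≤ M1 * (Hn * h ^ α) := by
        rw [hM1v]; exact mul_le_mul_of_nonneg_left h1 hM1n
      have h9 := neg_abs_le ((inner ℝ v (deriv x t - v)) : ℝ)
      rw [h5, h6]; linarith
    have hlow : (b - a) * (M1 * M1 - M1 * (Hn * h ^ α))
        ≤ ∫ t in a..b, (inner ℝ v (deriv x t) : ℝ) := by
      have h1 := intervalIntegral.integral_mono_on hab'
        (intervalIntegrable_const (μ := MeasureTheory.volume)) (hcont'.intervalIntegrable a b) hpt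
      rwa [intervalIntegral.integral_const, smul_eq_mul] at h1
    have hCS : ∀ t ∈ Set.Icc (0:ℝ) T, |(inner ℝ v (x t) : ℝ)| ≤ M1 * M0 := by
      intro t ht
      refine le_trans (abs_real_inner_le_norm _ _) ?_
      rw [hM1v]
      exact mul_le_mul_of_nonneg_left (hM0b t ht) hM1n
    have hb' := hCS b ⟨le_trans ha0 hab', hbT⟩
    have ha' := hCS a ⟨ha0, le_trans hab' hbT⟩
    have h10 := le_abs_self ((inner ℝ v (x b)) : ℝ)
    have h11 := neg_abs_le ((inner ℝ v (x a)) : ℝ)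
    calc h * (M1 * M1 - M1 * (Hn * h ^ α))
        = (b - a) * (M1 * M1 - M1 * (Hn * h ^ α)) := by rw [hab]
      _ ≤ ∫ t in a..b, (inner ℝ v (deriv x t) : ℝ) := hlow
      _ = (inner ℝ v (x b) : ℝ) - (inner ℝ v (x a) : ℝ) := hint
      _ ≤ 2 * (M1 * M0) := by linarith
  rcases eq_or_lt_of_le hM1n with hM1z | hM1pos
  · rw [← hM1z, Real.zero_rpow (by positivity : (1:ℝ) + α ≠ 0)]
    have hM0a : 0 ≤ M0 ^ α := Real.rpow_nonneg hM0n α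
    have hcn : 0 ≤ c := by linarith
    exact mul_nonneg (mul_nonneg hcn hM0a) (by linarith)
  have hg1 : M1 ^ (1 + α) = M1 * M1 ^ α := by
    rw [Real.rpow_add hM1pos, Real.rpow_one]
  have hM0a : 0 ≤ M0 ^ α := Real.rpow_nonneg hM0n α
  rcases le_or_gt (Hn * (T / 2) ^ α) (M1 / 2) with hcase | hcase
  · have hk := key (T / 2) (by linarith) le_rfl
    have e1 : M1 * (Hn * (T / 2) ^ α) ≤ M1 * (M1 / 2) :=
      mul_le_mul_of_nonneg_left hcase hM1pos.le
    have e3 : T / 2 * (M1 * (M1 / 2)) ≤ 2 * (M1 * M0) := by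
      calc T / 2 * (M1 * (M1 / 2))
          ≤ T / 2 * (M1 * M1 - M1 * (Hn * (T / 2) ^ α)) := by
            apply mul_le_mul_of_nonneg_left (by linarith) (by linarith)
        _ ≤ 2 * (M1 * M0) := hk
    have h1 : T * M1 ≤ 8 * M0 := by
      refine (mul_le_mul_iff_of_pos_right hM1pos).mp ?_
      calc T * M1 * M1 = 4 * (T / 2 * (M1 * (M1 / 2))) := by ring
        _ ≤ 4 * (2 * (M1 * M0)) := by linarith
        _ = 8 * M0 * M1 := by ring
    have h2 : M1 ≤ 8 / T * M0 := by
      rw [div_mul_eq_mul_div, le_div_iff₀ hT]; linarith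
    have h3 : M1 ^ α ≤ (8 / T) ^ α * M0 ^ α := by
      rw [← Real.mul_rpow hT8.le hM0n]
      exact Real.rpow_le_rpow hM1pos.le h2 hα0
    calc M1 ^ (1 + α) = M1 * M1 ^ α := hg1
      _ ≤ (M0 + M1 + Hn) * ((8 / T) ^ α * M0 ^ α) := by
          exact mul_le_mul (by linarith) h3 (Real.rpow_nonneg hM1pos.le α) hNn
      _ = (8 / T) ^ α * M0 ^ α * (M0 + M1 + Hn) := by ring
      _ ≤ c * M0 ^ α * (M0 + M1 + Hn) :=
          mul_le_mul_of_nonneg_right (mul_le_mul_of_nonneg_right hc8 hM0a) hNn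
  · have hTp : (0:ℝ) < (T / 2) ^ α := Real.rpow_pos_of_pos (by linarith) α
    have hHp : 0 < Hn := by nlinarith
    have hq : 0 < M1 / (2 * Hn) := div_pos hM1pos (by linarith)
    set h := (M1 / (2 * Hn)) ^ α⁻¹ with hhdef
    have hh0 : 0 < h := Real.rpow_pos_of_pos hq _
    have hhα : h ^ α = M1 / (2 * Hn) := Real.rpow_inv_rpow hq.le hαne
    clear_value h
    have hhT : h ≤ T / 2 := by
      have h1 : M1 / (2 * Hn) ≤ (T / 2) ^ α := by
        rw [div_le_iff₀ (by linarith : (0:ℝ) < 2 * Hn)]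
        calc M1 ≤ 2 * (Hn * (T / 2) ^ α) := by linarith
          _ = (T / 2) ^ α * (2 * Hn) := by ring
      calc h = (M1 / (2 * Hn)) ^ α⁻¹ := hhdef
        _ ≤ ((T / 2) ^ α) ^ α⁻¹ :=
            Real.rpow_le_rpow hq.le h1 (by positivity : (0:ℝ) ≤ α⁻¹)
        _ = T / 2 := Real.rpow_rpow_inv (by linarith) hαne
    have hk := key h hh0 hhT
    rw [hhα] at hk
    have hHne : Hn ≠ 0 := ne_of_gt hHp
    have hsimp : Hn * (M1 / (2 * Hn)) = M1 / 2 := by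
      rw [← div_div, mul_comm, div_mul_cancel₀ _ hHne]
    rw [hsimp] at hk
    have hhle : h ≤ 4 * M0 / M1 := by
      rw [le_div_iff₀ hM1pos]
      refine (mul_le_mul_iff_of_pos_right hM1pos).mp ?_
      calc h * M1 * M1 = 2 * (h * (M1 * M1 - M1 * (M1 / 2))) := by ring
        _ ≤ 2 * (2 * (M1 * M0)) := by linarith
        _ = 4 * M0 * M1 := by ring
    have h2 : M1 / (2 * Hn) ≤ (4 * M0 / M1) ^ α := by
      rw [← hhα]; exact Real.rpow_le_rpow hh0.le hhle hα0
    have h3 : (4 * M0 / M1) ^ α = (4 * M0) ^ α / M1 ^ α :=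
      Real.div_rpow (by linarith) hM1pos.le α
    have hM1a : 0 < M1 ^ α := Real.rpow_pos_of_pos hM1pos α
    have h4 : M1 * M1 ^ α ≤ (4 * M0) ^ α * (2 * Hn) := by
      rw [h3] at h2
      exact (div_le_div_iff₀ (by linarith) hM1a).mp h2
    have h5 : (4 * M0) ^ α = 4 ^ α * M0 ^ α := Real.mul_rpow (by norm_num) hM0n
    calc M1 ^ (1 + α) = M1 * M1 ^ α := hg1
      _ ≤ 4 ^ α * M0 ^ α * (2 * Hn) := by rw [← h5]; exact h4
      _ = 2 * 4 ^ α * M0 ^ α * Hn := by ring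
      _ ≤ c * M0 ^ α * Hn :=
          mul_le_mul_of_nonneg_right (mul_le_mul_of_nonneg_right hc4 hM0a) hHnn
      _ ≤ c * M0 ^ α * (M0 + M1 + Hn) := by
          have hcM : 0 ≤ c * M0 ^ α := mul_nonneg (by linarith) hM0a
          exact mul_le_mul_of_nonneg_left (by linarith) hcM
end

section
/- Let T > 0, m > 0, d ≥ 1, α ∈ (0,1). Let f:ℝᵈ→ℝᵈ be twice continuously differentiable with all first and second order partial derivatives bounded and globally Lipschitz continuous, and suppose there exist β ∈ [0,1) and c₀ > 0 with |f(x)| ≤ |x|^β + c₀ for all x ∈ ℝᵈ. For continuously differentiable x:[0,T]→ℝᵈ define U(x) = m⟨f(x(T)), ẋ(T)⟩ − m⟨f(x(0)), ẋ(0)⟩ − ∫₀ᵀ ( m⟨Df(x(t))ẋ(t), ẋ(t)⟩ − ⟨f(x(t)), ẋ(t)⟩ + (1/2)|f(x(t))|² ) dt, where Df denotes the Jacobian of f. Then for every ε > 0 there exists M > 0 such that U(x) ≤ ε·‖x‖²_{C^{1+α}} + M for every continuously differentiable x:[0,T]→ℝᵈ with α-Hölder continuous derivative. -/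
open scoped RealInnerProductSpace
open scoped ENNReal NNReal

lemma aux_young {C c₀ ε β : ℝ} (hC : 0 ≤ C) (hc₀ : 0 ≤ c₀) (hε : 0 < ε)
    (hβ0 : 0 ≤ β) (hβ : β < 1) :
    ∃ M > 0, ∀ N : ℝ, 0 ≤ N → C * (N ^ β + c₀) * N ≤ ε * N ^ 2 + M := by
  set R : ℝ := max 1 ((C * (1 + c₀) / ε + 1) ^ (1 / (1 - β))) with hR
  have hR1 : (1:ℝ) ≤ R := le_max_left _ _
  have hR0 : 0 < R := lt_of_lt_of_le one_pos hR1
  have hM0 : 0 ≤ C * (R ^ β + c₀) * R :=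
    mul_nonneg (mul_nonneg hC (add_nonneg (Real.rpow_nonneg hR0.le β) hc₀)) hR0.le
  refine ⟨C * (R ^ β + c₀) * R + 1, by linarith, fun N hN => ?_⟩
  rcases le_or_gt N R with hNR | hNR
  · have hNb : N ^ β ≤ R ^ β := Real.rpow_le_rpow hN hNR hβ0
    have h1 : C * (N ^ β + c₀) * N ≤ C * (R ^ β + c₀) * R := by
      gcongr
    nlinarith [mul_nonneg hε.le (sq_nonneg N)]
  · have hN1 : (1:ℝ) ≤ N := le_trans hR1 hNR.le
    have hN0 : (0:ℝ) < N := lt_of_lt_of_le one_pos hN1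
    have hNb1 : (1:ℝ) ≤ N ^ β := Real.one_le_rpow hN1 hβ0
    have step1 : C * (N ^ β + c₀) * N ≤ C * (1 + c₀) * (N ^ β * N) := by
      nlinarith [mul_nonneg (mul_nonneg (mul_nonneg hC hc₀) hN0.le)
        (sub_nonneg.2 hNb1)]
    have h0 : (0:ℝ) ≤ C * (1 + c₀) / ε + 1 := by positivity
    have hbase : C * (1 + c₀) / ε + 1 ≤ N ^ (1 - β) := by
      have h2 : ((C * (1 + c₀) / ε + 1) ^ (1 / (1 - β))) ^ (1 - β) ≤ N ^ (1 - β) := by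
        apply Real.rpow_le_rpow (Real.rpow_nonneg h0 _) (le_trans (le_max_right _ _) hNR.le)
        linarith
      rwa [← Real.rpow_mul h0, one_div,
        inv_mul_cancel₀ (by linarith : (1:ℝ) - β ≠ 0), Real.rpow_one] at h2
    have hεN : C * (1 + c₀) ≤ ε * N ^ (1 - β) := by
      have h3 := mul_le_mul_of_nonneg_left hbase hε.le
      calc C * (1 + c₀) = ε * (C * (1 + c₀) / ε) := by field_simp
        _ ≤ ε * (C * (1 + c₀) / ε + 1) := by nlinarith
        _ ≤ ε * N ^ (1 - β) := h3
    have hsplit : N ^ (1 - β) * (N ^ β * N) = N ^ 2 := by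
      have h := Real.rpow_add hN0 (1 - β) β
      rw [show (1:ℝ) - β + β = 1 by ring, Real.rpow_one] at h
      calc N ^ (1 - β) * (N ^ β * N) = N ^ (1 - β) * N ^ β * N := by ring
        _ = N * N := by rw [← h]
        _ = N ^ 2 := by ring
    calc C * (N ^ β + c₀) * N ≤ C * (1 + c₀) * (N ^ β * N) := step1
      _ ≤ ε * N ^ (1 - β) * (N ^ β * N) :=
          mul_le_mul_of_nonneg_right hεN (by positivity)
      _ = ε * N ^ 2 := by rw [mul_assoc, hsplit]
      _ ≤ ε * N ^ 2 + (C * (R ^ β + c₀) * R + 1) := by linarith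


lemma aux_interval {d : ℕ} (T m K G B H α : ℝ)
    (f : EuclideanSpace ℝ (Fin d) → EuclideanSpace ℝ (Fin d))
    (x : ℝ → EuclideanSpace ℝ (Fin d))
    (hf : ContDiff ℝ 2 f) (hx : ContDiff ℝ 1 x)
    (hm : 0 ≤ m) (hK0 : 0 ≤ K) (hG0 : 0 ≤ G) (hB0 : 0 ≤ B) (hH0 : 0 ≤ H)
    (hα0 : 0 < α)
    (hKb : ∀ v, ‖fderiv ℝ f v‖ ≤ K)
    (hG : ∀ t ∈ Set.Icc (0:ℝ) T, ‖f (x t)‖ ≤ G)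
    (hB : ∀ t ∈ Set.Icc (0:ℝ) T, ‖deriv x t‖ ≤ B)
    (hH : ∀ s ∈ Set.Icc (0:ℝ) T, ∀ t ∈ Set.Icc (0:ℝ) T,
      ‖deriv x s - deriv x t‖ ≤ H * |s - t| ^ α)
    (a b : ℝ) (ha : a ∈ Set.Icc (0:ℝ) T) (hb : b ∈ Set.Icc (0:ℝ) T) (hab : a ≤ b) :
    m * ⟪f (x b), deriv x b⟫ - m * ⟪f (x a), deriv x a⟫
      - m * ∫ t in a..b, ⟪fderiv ℝ f (x t) (deriv x t), deriv x t⟫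
    ≤ m * G * (H * (b - a) ^ α) + m * (K * B * (H * (b - a) ^ α)) * (b - a) := by
  have hxdiff : Differentiable ℝ x := hx.differentiable one_ne_zero
  have hdc : Continuous (deriv x) := hx.continuous_deriv le_rfl
  have hfdiff : Differentiable ℝ f := hf.differentiable (by norm_num)
  have hfd_cont : Continuous (fderiv ℝ f) := hf.continuous_fderiv (by norm_num)
  have hgd : ∀ t, HasDerivAt (fun u => f (x u)) (fderiv ℝ f (x t) (deriv x t)) t := fun t =>
    (hfdiff (x t)).hasFDerivAt.comp_hasDerivAt t (hxdiff t).hasDerivAt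
  have hucont : Continuous (fun t => fderiv ℝ f (x t) (deriv x t)) :=
    (hfd_cont.comp hx.continuous).clm_apply hdc
  have hφcont : Continuous (fun t => ⟪fderiv ℝ f (x t) (deriv x t), deriv x t⟫) :=
    hucont.inner hdc
  set v : EuclideanSpace ℝ (Fin d) := deriv x b with hv
  -- FTC for ⟪f∘x, v⟫
  have hFTC : ∫ t in a..b, ⟪fderiv ℝ f (x t) (deriv x t), v⟫
      = ⟪f (x b), v⟫ - ⟪f (x a), v⟫ := by
    apply intervalIntegral.integral_eq_sub_of_hasDerivAt
    · intro t _
      simpa using (hgd t).inner ℝ (hasDerivAt_const t v)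
    · exact (hucont.inner continuous_const).intervalIntegrable a b
  have int1 : IntervalIntegrable (fun t => ⟪fderiv ℝ f (x t) (deriv x t), v⟫)
      MeasureTheory.volume a b := (hucont.inner continuous_const).intervalIntegrable a b
  have int2 : IntervalIntegrable (fun t => ⟪fderiv ℝ f (x t) (deriv x t), deriv x t⟫)
      MeasureTheory.volume a b := hφcont.intervalIntegrable a b
  have h1 : ∫ t in a..b, ⟪fderiv ℝ f (x t) (deriv x t), v - deriv x t⟫
      = (⟪f (x b), v⟫ - ⟪f (x a), v⟫)
        - ∫ t in a..b, ⟪fderiv ℝ f (x t) (deriv x t), deriv x t⟫ := by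
    rw [← hFTC, ← intervalIntegral.integral_sub int1 int2]
    congr 1
    ext t
    rw [inner_sub_right]
  have hsplit : m * ⟪f (x b), deriv x b⟫ - m * ⟪f (x a), deriv x a⟫
      - m * ∫ t in a..b, ⟪fderiv ℝ f (x t) (deriv x t), deriv x t⟫
      = m * ⟪f (x a), v - deriv x a⟫
        + m * ∫ t in a..b, ⟪fderiv ℝ f (x t) (deriv x t), v - deriv x t⟫ := by
    rw [h1, inner_sub_right]
    ring
  rw [hsplit]
  have hba0 : (0:ℝ) ≤ (b - a) ^ α := Real.rpow_nonneg (by linarith) α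
  -- term 1
  have hterm1 : m * ⟪f (x a), v - deriv x a⟫ ≤ m * G * (H * (b - a) ^ α) := by
    have h2 : ⟪f (x a), v - deriv x a⟫ ≤ ‖f (x a)‖ * ‖v - deriv x a‖ :=
      real_inner_le_norm _ _
    have h3 : ‖v - deriv x a‖ ≤ H * (b - a) ^ α := by
      have := hH b hb a ha
      rwa [abs_of_nonneg (by linarith : (0:ℝ) ≤ b - a)] at this
    have h4 : ‖f (x a)‖ * ‖v - deriv x a‖ ≤ G * (H * (b - a) ^ α) :=
      mul_le_mul (hG a ha) h3 (norm_nonneg _) hG0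
    calc m * ⟪f (x a), v - deriv x a⟫ ≤ m * (G * (H * (b - a) ^ α)) :=
          mul_le_mul_of_nonneg_left (le_trans h2 h4) hm
      _ = m * G * (H * (b - a) ^ α) := by ring
  -- term 2
  have hterm2 : m * ∫ t in a..b, ⟪fderiv ℝ f (x t) (deriv x t), v - deriv x t⟫
      ≤ m * (K * B * (H * (b - a) ^ α)) * (b - a) := by
    have hptwise : ∀ t ∈ Set.Icc a b,
        ⟪fderiv ℝ f (x t) (deriv x t), v - deriv x t⟫ ≤ K * B * (H * (b - a) ^ α) := by
      intro t ht
      have htT : t ∈ Set.Icc (0:ℝ) T :=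
        ⟨le_trans ha.1 ht.1, le_trans ht.2 hb.2⟩
      have h2 : ⟪fderiv ℝ f (x t) (deriv x t), v - deriv x t⟫
          ≤ ‖fderiv ℝ f (x t) (deriv x t)‖ * ‖v - deriv x t‖ := real_inner_le_norm _ _
      have h3 : ‖fderiv ℝ f (x t) (deriv x t)‖ ≤ K * B := by
        calc ‖fderiv ℝ f (x t) (deriv x t)‖ ≤ ‖fderiv ℝ f (x t)‖ * ‖deriv x t‖ :=
              ContinuousLinearMap.le_opNorm _ _
          _ ≤ K * B := mul_le_mul (hKb _) (hB t htT) (norm_nonneg _) hK0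
      have h4 : ‖v - deriv x t‖ ≤ H * (b - a) ^ α := by
        have h5 := hH b hb t htT
        have h6 : |b - t| ≤ b - a := by
          rw [abs_of_nonneg (by linarith [ht.2] : (0:ℝ) ≤ b - t)]
          linarith [ht.1]
        calc ‖v - deriv x t‖ ≤ H * |b - t| ^ α := h5
          _ ≤ H * (b - a) ^ α :=
            mul_le_mul_of_nonneg_left
              (Real.rpow_le_rpow (abs_nonneg _) h6 hα0.le) hH0
      calc ⟪fderiv ℝ f (x t) (deriv x t), v - deriv x t⟫
          ≤ ‖fderiv ℝ f (x t) (deriv x t)‖ * ‖v - deriv x t‖ := h2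
        _ ≤ K * B * (H * (b - a) ^ α) :=
            mul_le_mul h3 h4 (norm_nonneg _) (by positivity)
    have hint : ∫ t in a..b, ⟪fderiv ℝ f (x t) (deriv x t), v - deriv x t⟫
        ≤ ∫ _t in a..b, K * B * (H * (b - a) ^ α) := by
      apply intervalIntegral.integral_mono_on hab
        ((hucont.inner (continuous_const.sub hdc)).intervalIntegrable a b)
        (intervalIntegrable_const)
      exact hptwise
    rw [intervalIntegral.integral_const, smul_eq_mul] at hint
    calc m * ∫ t in a..b, ⟪fderiv ℝ f (x t) (deriv x t), v - deriv x t⟫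
        ≤ m * ((b - a) * (K * B * (H * (b - a) ^ α))) :=
          mul_le_mul_of_nonneg_left hint hm
      _ = m * (K * B * (H * (b - a) ^ α)) * (b - a) := by ring
  linarith



/-- The log-density `U` of the conditioned Langevin law with respect to the
Gaussian bridge:
`U(x) = m⟨f(x(T)), ẋ(T)⟩ − m⟨f(x(0)), ẋ(0)⟩
  − ∫₀ᵀ ( m⟨Df(x)ẋ, ẋ⟩ − ⟨f(x), ẋ⟩ + |f(x)|²/2 ) dt`. -/
noncomputable def Ulog (T m : ℝ) {d : ℕ}
    (f : EuclideanSpace ℝ (Fin d) → EuclideanSpace ℝ (Fin d))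
    (x : ℝ → EuclideanSpace ℝ (Fin d)) : ℝ :=
  m * ⟪f (x T), deriv x T⟫ - m * ⟪f (x 0), deriv x 0⟫ -
    ∫ t in (0:ℝ)..T,
      (m * ⟪fderiv ℝ f (x t) (deriv x t), deriv x t⟫
        - ⟪f (x t), deriv x t⟫ + (1 / 2) * ‖f (x t)‖ ^ 2)

set_option maxHeartbeats 1000000

/-- Under the paper's assumptions on the drift `f`, for every `ε > 0` the
log-density `U` satisfies `U(x) ≤ ε ‖x‖²_{C^{1+α}} + M` uniformly over all
`C^{1+α}` paths `x`. -/
theorem stmt10 (T m : ℝ) (hT : 0 < T) (hm : 0 < m) (d : ℕ) (hd : 1 ≤ d)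
    (α : ℝ) (hα0 : 0 < α) (hα1 : α < 1)
    (f : EuclideanSpace ℝ (Fin d) → EuclideanSpace ℝ (Fin d))
    (hf : ContDiff ℝ 2 f)
    (hbdd : ∃ K : ℝ, (∀ v, ‖fderiv ℝ f v‖ ≤ K) ∧ (∀ v, ‖fderiv ℝ (fderiv ℝ f) v‖ ≤ K))
    (hlip : ∃ K : NNReal, LipschitzWith K (fderiv ℝ f)
      ∧ LipschitzWith K (fderiv ℝ (fderiv ℝ f)))
    (β c₀ : ℝ) (hβ0 : 0 ≤ β) (hβ : β < 1) (hc₀ : 0 < c₀)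
    (hgrowth : ∀ v, ‖f v‖ ≤ ‖v‖ ^ β + c₀) :
    ∀ ε > 0, ∃ M > 0, ∀ x : ℝ → EuclideanSpace ℝ (Fin d), ContDiff ℝ 1 x →
      (∃ K : NNReal, HolderOnWith K ⟨α, hα0.le⟩ (deriv x) (Set.Icc 0 T)) →
      Ulog T m f x ≤ ε * (C1alphaNorm T α x) ^ 2 + M := by
  obtain ⟨K, hKb, -⟩ := hbdd
  have hK0 : 0 ≤ K := le_trans (norm_nonneg _) (hKb 0)
  intro ε hε
  -- choose the number of subintervals n
  have hmKT : (0:ℝ) ≤ m * K * T := mul_nonneg (mul_nonneg hm.le hK0) hT.le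
  have hd1 : (0:ℝ) < 2 * (m * K * T + 1) := by linarith
  have hc : 0 < ε / (2 * (m * K * T + 1)) := div_pos hε hd1
  obtain ⟨c, hcdef⟩ : ∃ y : ℝ, y = (ε / (2 * (m * K * T + 1))) ^ (1 / α) := ⟨_, rfl⟩
  have hcpos : 0 < c := by rw [hcdef]; exact Real.rpow_pos_of_pos hc _
  obtain ⟨n, hn⟩ := exists_nat_gt (max 1 (T / c))
  have hn1R : (1:ℝ) < n := lt_of_le_of_lt (le_max_left _ _) hn
  have hnpos : (0:ℝ) < n := by linarith
  have hnne : (n:ℝ) ≠ 0 := hnpos.ne'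
  obtain ⟨δ, hδdef⟩ : ∃ y : ℝ, y = T / n := ⟨_, rfl⟩
  have hδpos : 0 < δ := by rw [hδdef]; exact div_pos hT hnpos
  have hnδ : (n:ℝ) * δ = T := by rw [hδdef]; field_simp
  have hδT : δ ≤ T := by
    rw [hδdef]
    calc T / n ≤ T / 1 := by
          apply div_le_div_of_nonneg_left hT.le one_pos hn1R.le
      _ = T := by ring
  have hδc : δ ≤ c := by
    rw [hδdef, div_le_iff₀ hnpos]
    have h1 : T / c < n := lt_of_le_of_lt (le_max_right _ _) hn
    have h2 : T < n * c := by
      rw [div_lt_iff₀ hcpos] at h1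
      linarith [h1]
    linarith [h2]
  have hcα : c ^ α = ε / (2 * (m * K * T + 1)) := by
    rw [hcdef, ← Real.rpow_mul hc.le, one_div, inv_mul_cancel₀ hα0.ne', Real.rpow_one]
  have hsmall : m * K * T * (δ ^ α) ≤ ε / 2 := by
    have h1 : δ ^ α ≤ c ^ α := Real.rpow_le_rpow hδpos.le hδc hα0.le
    have h2 : m * K * T * (δ ^ α) ≤ (m * K * T + 1) * (ε / (2 * (m * K * T + 1))) := by
      rw [← hcα]
      apply mul_le_mul (by linarith) h1 (Real.rpow_nonneg hδpos.le α) (by linarith)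
    calc m * K * T * (δ ^ α) ≤ (m * K * T + 1) * (ε / (2 * (m * K * T + 1))) := h2
      _ = ε / 2 := by
          have h9 : (m * K * T + 1) ≠ 0 := by linarith
          field_simp
          try ring
  -- choose M via the Young-type lemma
  obtain ⟨C₁, hC₁def⟩ : ∃ y : ℝ, y = (n:ℝ) * m * T ^ α + T := ⟨_, rfl⟩
  have hC₁0 : 0 ≤ C₁ := by
    rw [hC₁def]
    exact add_nonneg (mul_nonneg (mul_nonneg (Nat.cast_nonneg n) hm.le)
      (Real.rpow_nonneg hT.le α)) hT.le
  obtain ⟨M, hM0, hMy⟩ := aux_young (C := C₁) hC₁0 hc₀.le (half_pos hε) hβ0 hβ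
  refine ⟨M, hM0, ?_⟩
  rintro x hx ⟨K', hhol⟩
  -- basic continuity facts
  have hxdiff : Differentiable ℝ x := hx.differentiable one_ne_zero
  have hdc : Continuous (deriv x) := hx.continuous_deriv le_rfl
  have hfdiff : Differentiable ℝ f := hf.differentiable (by norm_num)
  have hfd_cont : Continuous (fderiv ℝ f) := hf.continuous_fderiv (by norm_num)
  have hucont : Continuous (fun t => fderiv ℝ f (x t) (deriv x t)) :=
    (hfd_cont.comp hx.continuous).clm_apply hdc
  have hφcont : Continuous (fun t => ⟪fderiv ℝ f (x t) (deriv x t), deriv x t⟫) :=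
    hucont.inner hdc
  have hfxcont : Continuous (fun t => f (x t)) := hfdiff.continuous.comp hx.continuous
  have hψcont : Continuous (fun t => ⟪f (x t), deriv x t⟫ - (1/2) * ‖f (x t)‖ ^ 2) :=
    (hfxcont.inner hdc).sub (continuous_const.mul ((hfxcont.norm).pow 2))
  -- sup bounds
  have hne : Nonempty (Set.Icc (0:ℝ) T) := ⟨⟨0, Set.left_mem_Icc.2 hT.le⟩⟩
  obtain ⟨A, hAdef⟩ : ∃ y : ℝ, y = ⨆ t : Set.Icc (0:ℝ) T, ‖x t‖ := ⟨_, rfl⟩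
  obtain ⟨B, hBdef⟩ : ∃ y : ℝ, y = ⨆ t : Set.Icc (0:ℝ) T, ‖deriv x t‖ := ⟨_, rfl⟩
  obtain ⟨H, hHdef⟩ : ∃ y : ℝ, y = ⨆ p : Set.Icc (0:ℝ) T × Set.Icc (0:ℝ) T,
      if (p.1 : ℝ) = (p.2 : ℝ) then 0
      else ‖deriv x p.1 - deriv x p.2‖ / |(p.1 : ℝ) - (p.2 : ℝ)| ^ α := ⟨_, rfl⟩
  have hNeq : C1alphaNorm T α x = A + B + H := by rw [hAdef, hBdef, hHdef]; rfl
  obtain ⟨Cx, hCx⟩ := isCompact_Icc.exists_bound_of_continuousOn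
    (hx.continuous.continuousOn : ContinuousOn x (Set.Icc (0:ℝ) T))
  have hbddA : BddAbove (Set.range fun t : Set.Icc (0:ℝ) T => ‖x t‖) :=
    ⟨Cx, by rintro y ⟨t, rfl⟩; exact hCx t t.2⟩
  have hA : ∀ t ∈ Set.Icc (0:ℝ) T, ‖x t‖ ≤ A := fun t ht => by
    rw [hAdef]; exact le_ciSup hbddA ⟨t, ht⟩
  have hA0 : 0 ≤ A := le_trans (norm_nonneg _) (hA 0 (Set.left_mem_Icc.2 hT.le))
  obtain ⟨Cd, hCd⟩ := isCompact_Icc.exists_bound_of_continuousOn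
    (hdc.continuousOn : ContinuousOn (deriv x) (Set.Icc (0:ℝ) T))
  have hbddB : BddAbove (Set.range fun t : Set.Icc (0:ℝ) T => ‖deriv x t‖) :=
    ⟨Cd, by rintro y ⟨t, rfl⟩; exact hCd t t.2⟩
  have hB : ∀ t ∈ Set.Icc (0:ℝ) T, ‖deriv x t‖ ≤ B := fun t ht => by
    rw [hBdef]; exact le_ciSup hbddB ⟨t, ht⟩
  have hB0 : 0 ≤ B := le_trans (norm_nonneg _) (hB 0 (Set.left_mem_Icc.2 hT.le))
  -- Hölder bound
  have hdist : ∀ s ∈ Set.Icc (0:ℝ) T, ∀ t ∈ Set.Icc (0:ℝ) T,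
      ‖deriv x s - deriv x t‖ ≤ (K' : ℝ) * |s - t| ^ α := by
    intro s hs t ht
    have h1 := hhol s hs t ht
    have h2 : (ENNReal.ofReal (dist (deriv x s) (deriv x t))) ≤
        ENNReal.ofReal ((K' : ℝ) * |s - t| ^ α) := by
      calc ENNReal.ofReal (dist (deriv x s) (deriv x t))
          = edist (deriv x s) (deriv x t) := (edist_dist _ _).symm
        _ ≤ (K' : ℝ≥0∞) * edist s t ^ ((⟨α, hα0.le⟩ : NNReal) : ℝ) := h1
        _ = ENNReal.ofReal ((K' : ℝ) * |s - t| ^ α) := by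
            rw [edist_dist, Real.dist_eq,
              ENNReal.ofReal_rpow_of_nonneg (abs_nonneg _) hα0.le,
              ← ENNReal.ofReal_coe_nnreal,
              ← ENNReal.ofReal_mul K'.coe_nonneg]
    have h3 := (ENNReal.ofReal_le_ofReal_iff
      (mul_nonneg K'.coe_nonneg (Real.rpow_nonneg (abs_nonneg _) α))).mp h2
    rwa [dist_eq_norm] at h3
  have hbddH : BddAbove (Set.range fun p : Set.Icc (0:ℝ) T × Set.Icc (0:ℝ) T =>
      if (p.1 : ℝ) = (p.2 : ℝ) then 0
      else ‖deriv x p.1 - deriv x p.2‖ / |(p.1 : ℝ) - (p.2 : ℝ)| ^ α) := by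
    refine ⟨(K' : ℝ), ?_⟩
    rintro y ⟨⟨s, t⟩, rfl⟩
    dsimp only
    split_ifs with hst
    · exact K'.coe_nonneg
    · rw [div_le_iff₀ (Real.rpow_pos_of_pos (abs_pos.2 (sub_ne_zero.2 hst)) α)]
      exact hdist s s.2 t t.2
  have hHle : ∀ s ∈ Set.Icc (0:ℝ) T, ∀ t ∈ Set.Icc (0:ℝ) T,
      ‖deriv x s - deriv x t‖ ≤ H * |s - t| ^ α := by
    intro s hs t ht
    by_cases hst : s = t
    · subst hst
      simp [Real.zero_rpow hα0.ne']
    · have hq := le_ciSup hbddH (⟨⟨s, hs⟩, ⟨t, ht⟩⟩ :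
        Set.Icc (0:ℝ) T × Set.Icc (0:ℝ) T)
      rw [if_neg hst, ← hHdef] at hq
      exact (div_le_iff₀ (Real.rpow_pos_of_pos (abs_pos.2 (sub_ne_zero.2 hst)) α)).mp hq
  have hH0 : 0 ≤ H := by
    have hq := le_ciSup hbddH (⟨⟨0, Set.left_mem_Icc.2 hT.le⟩, ⟨0, Set.left_mem_Icc.2 hT.le⟩⟩ :
      Set.Icc (0:ℝ) T × Set.Icc (0:ℝ) T)
    rwa [if_pos rfl, ← hHdef] at hq
  -- growth bound
  obtain ⟨G, hGdef⟩ : ∃ y : ℝ, y = A ^ β + c₀ := ⟨_, rfl⟩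
  have hG0 : 0 ≤ G := by rw [hGdef]; exact add_nonneg (Real.rpow_nonneg hA0 β) hc₀.le
  have hG : ∀ t ∈ Set.Icc (0:ℝ) T, ‖f (x t)‖ ≤ G := fun t ht => by
    rw [hGdef]
    exact (hgrowth (x t)).trans
      (add_le_add_left (Real.rpow_le_rpow (norm_nonneg _) (hA t ht) hβ0) c₀)
  -- partition
  obtain ⟨tp, htpdef⟩ : ∃ y : ℕ → ℝ, y = fun i : ℕ => i * δ := ⟨_, rfl⟩
  have htp0 : tp 0 = 0 := by simp [htpdef]
  have htpn : tp n = T := by rw [htpdef]; exact hnδ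
  have htpmem : ∀ i, i ≤ n → tp i ∈ Set.Icc (0:ℝ) T := by
    intro i hi
    rw [htpdef]
    constructor
    · exact mul_nonneg (Nat.cast_nonneg i) hδpos.le
    · calc (i:ℝ) * δ ≤ (n:ℝ) * δ :=
          mul_le_mul_of_nonneg_right (Nat.cast_le.2 hi) hδpos.le
        _ = T := hnδ
  -- telescoping
  have hsum2 := intervalIntegral.sum_integral_adjacent_intervals (μ := MeasureTheory.volume) (a := tp) (n := n)
    (fun k _ => hφcont.intervalIntegrable _ _)
  rw [htp0, htpn] at hsum2
  have htel : m * ⟪f (x T), deriv x T⟫ - m * ⟪f (x 0), deriv x 0⟫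
      - m * ∫ t in (0:ℝ)..T, ⟪fderiv ℝ f (x t) (deriv x t), deriv x t⟫
      ≤ (n:ℝ) * (m * G * (H * δ ^ α) + m * (K * B * (H * δ ^ α)) * δ) := by
    have hkey : ∀ i ∈ Finset.range n,
        m * ⟪f (x (tp (i+1))), deriv x (tp (i+1))⟫ - m * ⟪f (x (tp i)), deriv x (tp i)⟫
          - m * ∫ t in tp i..tp (i+1), ⟪fderiv ℝ f (x t) (deriv x t), deriv x t⟫
        ≤ m * G * (H * δ ^ α) + m * (K * B * (H * δ ^ α)) * δ := by
      intro i hi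
      have hi' : i < n := Finset.mem_range.mp hi
      have hstep : tp i ≤ tp (i+1) := by
        rw [htpdef]
        dsimp only
        push_cast
        exact mul_le_mul_of_nonneg_right (by linarith) hδpos.le
      have h := aux_interval T m K G B H α f x hf hx hm.le hK0 hG0 hB0 hH0 hα0
        hKb hG hB hHle (tp i) (tp (i+1)) (htpmem i hi'.le) (htpmem (i+1) hi') hstep
      have hdiff : tp (i+1) - tp i = δ := by
        rw [htpdef]; push_cast; ring
      rwa [hdiff] at h
    have e1 : ∑ i ∈ Finset.range n,
        (m * ⟪f (x (tp (i+1))), deriv x (tp (i+1))⟫ - m * ⟪f (x (tp i)), deriv x (tp i)⟫)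
        = m * ⟪f (x T), deriv x T⟫ - m * ⟪f (x 0), deriv x 0⟫ := by
      rw [Finset.sum_range_sub (fun i => m * ⟪f (x (tp i)), deriv x (tp i)⟫) n, htp0, htpn]
    have e2 : ∑ i ∈ Finset.range n,
        (m * ∫ t in tp i..tp (i+1), ⟪fderiv ℝ f (x t) (deriv x t), deriv x t⟫)
        = m * ∫ t in (0:ℝ)..T, ⟪fderiv ℝ f (x t) (deriv x t), deriv x t⟫ := by
      rw [← Finset.mul_sum, hsum2]
    calc m * ⟪f (x T), deriv x T⟫ - m * ⟪f (x 0), deriv x 0⟫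
        - m * ∫ t in (0:ℝ)..T, ⟪fderiv ℝ f (x t) (deriv x t), deriv x t⟫
        = ∑ i ∈ Finset.range n,
          ((m * ⟪f (x (tp (i+1))), deriv x (tp (i+1))⟫ - m * ⟪f (x (tp i)), deriv x (tp i)⟫)
            - m * ∫ t in tp i..tp (i+1), ⟪fderiv ℝ f (x t) (deriv x t), deriv x t⟫) := by
          rw [Finset.sum_sub_distrib, e1, e2]
      _ ≤ ∑ _i ∈ Finset.range n, (m * G * (H * δ ^ α) + m * (K * B * (H * δ ^ α)) * δ) :=
          Finset.sum_le_sum hkey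
      _ = (n:ℝ) * (m * G * (H * δ ^ α) + m * (K * B * (H * δ ^ α)) * δ) := by
          rw [Finset.sum_const, Finset.card_range, nsmul_eq_mul]
  -- tail bound
  have htail : ∫ t in (0:ℝ)..T, (⟪f (x t), deriv x t⟫ - (1/2) * ‖f (x t)‖ ^ 2)
      ≤ G * B * T := by
    have hptwise : ∀ t ∈ Set.Icc (0:ℝ) T,
        ⟪f (x t), deriv x t⟫ - (1/2) * ‖f (x t)‖ ^ 2 ≤ G * B := by
      intro t ht
      have h2 : ⟪f (x t), deriv x t⟫ ≤ ‖f (x t)‖ * ‖deriv x t‖ := real_inner_le_norm _ _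
      have h3 : ‖f (x t)‖ * ‖deriv x t‖ ≤ G * B :=
        mul_le_mul (hG t ht) (hB t ht) (norm_nonneg _) hG0
      linarith [sq_nonneg ‖f (x t)‖]
    have hint : ∫ t in (0:ℝ)..T, (⟪f (x t), deriv x t⟫ - (1/2) * ‖f (x t)‖ ^ 2)
        ≤ ∫ _t in (0:ℝ)..T, G * B :=
      intervalIntegral.integral_mono_on hT.le (hψcont.intervalIntegrable _ _)
        intervalIntegrable_const hptwise
    rw [intervalIntegral.integral_const, smul_eq_mul] at hint
    calc ∫ t in (0:ℝ)..T, (⟪f (x t), deriv x t⟫ - (1/2) * ‖f (x t)‖ ^ 2)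
        ≤ (T - 0) * (G * B) := hint
      _ = G * B * T := by ring
  -- rewrite Ulog
  have hUeq : Ulog T m f x
      = (m * ⟪f (x T), deriv x T⟫ - m * ⟪f (x 0), deriv x 0⟫
          - m * ∫ t in (0:ℝ)..T, ⟪fderiv ℝ f (x t) (deriv x t), deriv x t⟫)
        + ∫ t in (0:ℝ)..T, (⟪f (x t), deriv x t⟫ - (1/2) * ‖f (x t)‖ ^ 2) := by
    rw [Ulog]
    rw [intervalIntegral.integral_congr
      (g := fun t => m * ⟪fderiv ℝ f (x t) (deriv x t), deriv x t⟫
        - (⟪f (x t), deriv x t⟫ - (1/2) * ‖f (x t)‖ ^ 2))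
      (fun t _ => by ring)]
    rw [intervalIntegral.integral_sub
      ((hφcont.const_mul m).intervalIntegrable _ _)
      (hψcont.intervalIntegrable _ _),
      intervalIntegral.integral_const_mul]
    ring
  -- final assembly
  obtain ⟨N, hNdef⟩ : ∃ y : ℝ, y = A + B + H := ⟨_, rfl⟩
  rw [← hNdef] at hNeq
  have hN0 : 0 ≤ N := by rw [hNdef]; linarith
  have hBN : B ≤ N := by rw [hNdef]; linarith
  have hHN : H ≤ N := by rw [hNdef]; linarith
  have hAN : A ≤ N := by rw [hNdef]; linarith
  have hGN : G ≤ N ^ β + c₀ := by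
    rw [hGdef]
    exact add_le_add_left (Real.rpow_le_rpow hA0 hAN hβ0) c₀
  have hδα0 : 0 ≤ δ ^ α := Real.rpow_nonneg hδpos.le α
  have hδα : δ ^ α ≤ T ^ α := Real.rpow_le_rpow hδpos.le hδT hα0.le
  have hNβ0 : 0 ≤ N ^ β + c₀ := add_nonneg (Real.rpow_nonneg hN0 β) hc₀.le
  -- term I bound
  have hI : (n:ℝ) * (m * G * (H * δ ^ α)) ≤ (n:ℝ) * m * T ^ α * ((N ^ β + c₀) * N) := by
    have h1 : G * H ≤ (N ^ β + c₀) * N := mul_le_mul hGN hHN hH0 hNβ0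
    calc (n:ℝ) * (m * G * (H * δ ^ α)) = (n:ℝ) * m * ((G * H) * δ ^ α) := by ring
      _ ≤ (n:ℝ) * m * (((N ^ β + c₀) * N) * T ^ α) := by
          apply mul_le_mul_of_nonneg_left _ (mul_nonneg (Nat.cast_nonneg n) hm.le)
          exact mul_le_mul h1 hδα hδα0 (mul_nonneg hNβ0 hN0)
      _ = (n:ℝ) * m * T ^ α * ((N ^ β + c₀) * N) := by ring
  -- term II bound
  have hII : (n:ℝ) * (m * (K * B * (H * δ ^ α)) * δ) ≤ (ε / 2) * N ^ 2 := by
    have h1 : B * H ≤ N ^ 2 := by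
      calc B * H ≤ N * N := mul_le_mul hBN hHN hH0 hN0
        _ = N ^ 2 := (sq N).symm
    calc (n:ℝ) * (m * (K * B * (H * δ ^ α)) * δ)
        = (m * K * ((n:ℝ) * δ) * δ ^ α) * (B * H) := by ring
      _ = (m * K * T * δ ^ α) * (B * H) := by rw [hnδ]
      _ ≤ (ε / 2) * N ^ 2 :=
          mul_le_mul hsmall h1 (mul_nonneg hB0 hH0) (half_pos hε).le
  -- term III bound
  have hIII : G * B * T ≤ T * ((N ^ β + c₀) * N) := by
    calc G * B * T = T * (G * B) := by ring
      _ ≤ T * ((N ^ β + c₀) * N) := by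
          apply mul_le_mul_of_nonneg_left _ hT.le
          exact mul_le_mul hGN hBN hB0 hNβ0
  have hfin : Ulog T m f x ≤ (ε / 2) * N ^ 2 + C₁ * (N ^ β + c₀) * N := by
    rw [hUeq]
    have h := add_le_add htel htail
    calc (m * ⟪f (x T), deriv x T⟫ - m * ⟪f (x 0), deriv x 0⟫
          - m * ∫ t in (0:ℝ)..T, ⟪fderiv ℝ f (x t) (deriv x t), deriv x t⟫)
        + ∫ t in (0:ℝ)..T, (⟪f (x t), deriv x t⟫ - (1/2) * ‖f (x t)‖ ^ 2)
        ≤ (n:ℝ) * (m * G * (H * δ ^ α) + m * (K * B * (H * δ ^ α)) * δ) + G * B * T := h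
      _ = (n:ℝ) * (m * G * (H * δ ^ α)) + (n:ℝ) * (m * (K * B * (H * δ ^ α)) * δ)
          + G * B * T := by ring
      _ ≤ (n:ℝ) * m * T ^ α * ((N ^ β + c₀) * N) + (ε / 2) * N ^ 2
          + T * ((N ^ β + c₀) * N) := by linarith
      _ = (ε / 2) * N ^ 2 + C₁ * (N ^ β + c₀) * N := by rw [hC₁def]; ring
  have hy := hMy N hN0
  rw [hNeq]
  calc Ulog T m f x ≤ (ε / 2) * N ^ 2 + C₁ * (N ^ β + c₀) * N := hfin
    _ ≤ (ε / 2) * N ^ 2 + ((ε / 2) * N ^ 2 + M) := by linarith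
    _ = ε * N ^ 2 + M := by ring
end
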